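/- (q-Rice formula, residue form) Let q be a complex number with 0 < |q| < 1, n ≥ 1, and let f be a function meromorphic in a domain containing the points q^{-1}, …, q^{-n}, holomorphic at each of them. Then ∑_{i=1}^n [n choose i]_q (-1)^{i-1} q^{binom(i,2)} f(q^{-i}) = (1/2πi) ∮_C ((q;q)_n/(z;q)_{n+1}) f(z) dz, where C is a positively oriented contour encircling exactly the poles q^{-1}, …, q^{-n} of (z;q)_{n+1}^{-1} and no singularities of f. -/

import Mathlib

open Finset Metric Real

/-- The q-Pochhammer symbol `(a;q)_n`. -/
noncomputable def qPochC (q a : ℂ) (n : ℕ) : ℂ :=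
  ∏ k ∈ Finset.range n, (1 - a * q ^ k)

/-- The Gaussian binomial coefficient. -/
noncomputable def qBinomC (q : ℂ) (n i : ℕ) : ℂ :=
  qPochC q q n / (qPochC q q i * qPochC q q (n - i))

lemma partial_fractions (a : ℕ → ℂ) :
    ∀ (s : Finset ℕ), s.Nonempty → (Set.InjOn a s) → ∀ z : ℂ, (∀ j ∈ s, z ≠ a j) →
    (∏ j ∈ s, (z - a j))⁻¹ =
      ∑ j ∈ s, ((z - a j) * ∏ k ∈ s.erase j, (a j - a k))⁻¹ := by
  intro s hs
  induction hs using Finset.Nonempty.cons_induction with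
  | singleton j =>
    intro _ z hz
    simp
  | cons i s hi hs ih =>
    intro hinj z hz
    have hinj' : Set.InjOn a s := hinj.mono (by intro x hx; simp [Finset.mem_cons, hx])
    have hine : ∀ j ∈ s, a i ≠ a j := by
      intro j hj h
      exact hi (by rwa [hinj (by simp) (by simp [hj]) h])
    have hz' : ∀ j ∈ s, z ≠ a j := fun j hj => hz j (by simp [hj])
    have hzi : z ≠ a i := hz i (by simp)
    have hE : ∀ j ∈ s, (∏ k ∈ s.erase j, (a j - a k)) ≠ 0 := by
      intro j hj
      refine Finset.prod_ne_zero_iff.2 fun k hk => sub_ne_zero.2 ?_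
      intro h
      exact (Finset.ne_of_mem_erase hk).symm
        (hinj' (by simp [hj]) (by simp [Finset.mem_of_mem_erase hk]) h)
    have key : ∀ j ∈ s, (z - a i)⁻¹ * ((z - a j) * ∏ k ∈ s.erase j, (a j - a k))⁻¹ =
        ((z - a j) * ((a j - a i) * ∏ k ∈ s.erase j, (a j - a k)))⁻¹
          + (z - a i)⁻¹ * ((a i - a j) * ∏ k ∈ s.erase j, (a j - a k))⁻¹ := by
      intro j hj
      have h1 : z - a i ≠ 0 := sub_ne_zero.2 hzi
      have h2 : z - a j ≠ 0 := sub_ne_zero.2 (hz' j hj)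
      have h3 : a j - a i ≠ 0 := sub_ne_zero.2 fun h => hine j hj h.symm
      have h4 : a i - a j ≠ 0 := sub_ne_zero.2 (hine j hj)
      have h5 := hE j hj
      field_simp
      ring
    rw [Finset.prod_cons, mul_inv, ih hinj' z hz', Finset.mul_sum]
    have hkey : (∑ j ∈ s, (z - a i)⁻¹ * ((z - a j) * ∏ k ∈ s.erase j, (a j - a k))⁻¹)
        = ∑ j ∈ s, (((z - a j) * ((a j - a i) * ∏ k ∈ s.erase j, (a j - a k)))⁻¹
          + (z - a i)⁻¹ * ((a i - a j) * ∏ k ∈ s.erase j, (a j - a k))⁻¹) :=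
      Finset.sum_congr rfl key
    rw [hkey]
    simp only [Finset.sum_add_distrib]
    rw [← Finset.mul_sum]
    rw [← ih hinj' (a i) hine]
    rw [Finset.sum_cons, Finset.erase_cons]
    rw [add_comm]
    have goalstep : (∑ j ∈ s, ((z - a j) * ((a j - a i) * ∏ k ∈ s.erase j, (a j - a k)))⁻¹)
        = ∑ j ∈ s, ((z - a j) * ∏ k ∈ (Finset.cons i s hi).erase j, (a j - a k))⁻¹ := by
      refine Finset.sum_congr rfl fun j hj => ?_
      have hji : j ≠ i := fun h => hi (h ▸ hj)
      rw [Finset.erase_cons_of_ne _ hji.symm, Finset.prod_cons]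
    rw [goalstep]
    rw [mul_inv]

lemma circleIntegral_finset_sum {ι : Type*} (s : Finset ι) (F : ι → ℂ → ℂ) (c : ℂ) (R : ℝ)
    (h : ∀ i ∈ s, CircleIntegrable (F i) c R) :
    (∮ z in C(c,R), ∑ i ∈ s, F i z) = ∑ i ∈ s, ∮ z in C(c,R), F i z := by
  simp only [circleIntegral, Finset.smul_sum]
  exact intervalIntegral.integral_finset_sum (fun i hi => (h i hi).out)

lemma aux_zpow_prod (q : ℂ) (hq : q ≠ 0) (i : ℕ) :
    ∏ j ∈ Finset.range i, ((-1) * q ^ (-(j + 1 : ℕ) : ℤ))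
      = (-1) ^ i * (q ^ ((i + 1).choose 2))⁻¹ := by
  induction i with
  | zero => simp
  | succ m ih =>
    rw [Finset.prod_range_succ, ih]
    have h2 : (m + 2).choose 2 = (m + 1).choose 2 + (m + 1) := by
      simp [Nat.choose_two_right]
      ring_nf
      omega
    rw [h2, pow_add, pow_succ, zpow_neg, zpow_natCast]
    field_simp
    ring

lemma aux_A (q : ℂ) (hq : q ≠ 0) (i : ℕ) :
    ∏ k ∈ Finset.range i, (1 - q ^ (-(i : ℤ)) * q ^ k)
      = (-1) ^ i * (q ^ ((i + 1).choose 2))⁻¹ * qPochC q q i := by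
  have refl1 : ∏ k ∈ Finset.range i, (1 - q ^ (-(i : ℤ)) * q ^ k)
      = ∏ j ∈ Finset.range i, (1 - q ^ (-(i : ℤ)) * q ^ (i - 1 - j)) :=
    (Finset.prod_range_reflect (fun k => 1 - q ^ (-(i : ℤ)) * q ^ k) i).symm
  rw [refl1]
  have step : ∀ j ∈ Finset.range i, (1 - q ^ (-(i : ℤ)) * q ^ (i - 1 - j))
      = ((-1) * q ^ (-(j + 1 : ℕ) : ℤ)) * (1 - q * q ^ j) := by
    intro j hj
    have hji : j < i := Finset.mem_range.mp hj
    have key : q ^ (-(i : ℤ)) * q ^ (i - 1 - j) = q ^ (-(j + 1 : ℕ) : ℤ) := by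
      rw [← zpow_natCast q (i - 1 - j), ← zpow_add₀ hq]
      congr 1
      have : (i - 1 - j : ℕ) = (i - (j + 1) : ℕ) := by omega
      rw [this]
      push_cast [Nat.cast_sub (by omega : j + 1 ≤ i)]
      ring
    have key2 : q ^ (-(j + 1 : ℕ) : ℤ) * (q * q ^ j) = 1 := by
      rw [← pow_succ' q j, ← zpow_natCast q (j + 1), ← zpow_add₀ hq,
        show ((-(j + 1 : ℕ) : ℤ)) + ((j + 1 : ℕ) : ℤ) = 0 by push_cast; ring, zpow_zero]
    calc 1 - q ^ (-(i : ℤ)) * q ^ (i - 1 - j)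
        = 1 - q ^ (-(j + 1 : ℕ) : ℤ) := by rw [key]
      _ = ((-1) * q ^ (-(j + 1 : ℕ) : ℤ)) * (1 - q * q ^ j) := by
          linear_combination -key2
  rw [Finset.prod_congr rfl step, Finset.prod_mul_distrib, aux_zpow_prod q hq i]
  rfl

lemma aux_B (q : ℂ) (hq : q ≠ 0) (i n : ℕ) (hin : i ≤ n) :
    ∏ k ∈ Finset.Ico (i + 1) (n + 1), (1 - q ^ (-(i : ℤ)) * q ^ k) = qPochC q q (n - i) := by
  rw [Finset.prod_Ico_eq_prod_range]
  have hcard : n + 1 - (i + 1) = n - i := by omega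
  rw [hcard, qPochC]
  refine Finset.prod_congr rfl fun j _ => ?_
  congr 1
  have : q ^ (-(i : ℤ)) * q ^ (i + 1 + j) = q * q ^ j := by
    rw [← zpow_natCast q (i + 1 + j), ← zpow_add₀ hq, ← pow_succ' q j, ← zpow_natCast q (j + 1)]
    congr 1
    push_cast
    ring
  rw [this]

lemma aux_erase (q : ℂ) (hq : q ≠ 0) {i n : ℕ} (hi : i ≤ n) :
    ∏ k ∈ (Finset.range (n + 1)).erase i, (1 - q ^ (-(i : ℤ)) * q ^ k)
      = (-1) ^ i * (q ^ ((i + 1).choose 2))⁻¹ * (qPochC q q i * qPochC q q (n - i)) := by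
  have hset : (Finset.range (n + 1)).erase i
      = Finset.range i ∪ Finset.Ico (i + 1) (n + 1) := by
    ext x
    simp only [Finset.mem_erase, Finset.mem_range, Finset.mem_union, Finset.mem_Ico]
    omega
  have hdisj : Disjoint (Finset.range i) (Finset.Ico (i + 1) (n + 1)) := by
    rw [Finset.disjoint_left]
    intro x hx hx'
    simp only [Finset.mem_range] at hx
    simp only [Finset.mem_Ico] at hx'
    omega
  rw [hset, Finset.prod_union hdisj, aux_A q hq i, aux_B q hq i n hi]
  ring

lemma aux_poch_factor (q z : ℂ) (hq : q ≠ 0) (m : ℕ) :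
    qPochC q z m = (∏ j ∈ Finset.range m, ((-1) * q ^ j))
      * ∏ j ∈ Finset.range m, (z - q ^ (-(j : ℤ))) := by
  rw [qPochC, ← Finset.prod_mul_distrib]
  refine Finset.prod_congr rfl fun j _ => ?_
  have hjj : (q : ℂ) ^ j * q ^ (-(j : ℤ)) = 1 := by
    rw [← zpow_natCast q j, ← zpow_add₀ hq, show ((j : ℤ)) + (-(j : ℤ)) = 0 by ring, zpow_zero]
  linear_combination z * q ^ j - z * q ^ j - hjj

lemma aux_D (q : ℂ) (hq : q ≠ 0) {i n : ℕ} (h1i : 1 ≤ i) (hi : i ≤ n) :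
    (∏ j ∈ Finset.range (n + 1), ((-1) * q ^ j))
        * ∏ k ∈ (Finset.range (n + 1)).erase i, (q ^ (-(i : ℤ)) - q ^ (-(k : ℤ)))
      = (-1) ^ (i + 1) * (q ^ i.choose 2)⁻¹ * (qPochC q q i * qPochC q q (n - i)) := by
  have hmem : i ∈ Finset.range (n + 1) := Finset.mem_range.mpr (by omega)
  rw [← Finset.mul_prod_erase (Finset.range (n + 1)) _ hmem]
  rw [show ((-1) * q ^ i * ∏ j ∈ (Finset.range (n + 1)).erase i, ((-1) * q ^ j))
        * ∏ k ∈ (Finset.range (n + 1)).erase i, (q ^ (-(i : ℤ)) - q ^ (-(k : ℤ)))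
      = ((-1) * q ^ i) * ((∏ j ∈ (Finset.range (n + 1)).erase i, ((-1) * q ^ j))
        * ∏ k ∈ (Finset.range (n + 1)).erase i, (q ^ (-(i : ℤ)) - q ^ (-(k : ℤ)))) by ring,
    ← Finset.prod_mul_distrib]
  have step0 : ∀ k ∈ (Finset.range (n + 1)).erase i,
      ((-1) * q ^ k) * (q ^ (-(i : ℤ)) - q ^ (-(k : ℤ)))
        = (q ^ (-(i : ℤ)) - q ^ (-(k : ℤ))) * ((-1) * q ^ k) := fun k _ => mul_comm _ _
  rw [Finset.prod_congr rfl step0]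
  have step : ∀ k ∈ (Finset.range (n + 1)).erase i,
      (q ^ (-(i : ℤ)) - q ^ (-(k : ℤ))) * ((-1) * q ^ k) = 1 - q ^ (-(i : ℤ)) * q ^ k := by
    intro k _
    have hkk : (q : ℂ) ^ k * q ^ (-(k : ℤ)) = 1 := by
      rw [← zpow_natCast q k, ← zpow_add₀ hq, show ((k : ℤ)) + (-(k : ℤ)) = 0 by ring, zpow_zero]
    linear_combination hkk
  rw [Finset.prod_congr rfl step, aux_erase q hq hi]
  have hchoose : (i + 1).choose 2 = i.choose 2 + i := by
    rw [Nat.choose_succ_succ i 1, Nat.choose_one_right, Nat.add_comm]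
  rw [hchoose, pow_add]
  have h1 : (q : ℂ) ^ i.choose 2 ≠ 0 := pow_ne_zero _ hq
  have h2 : (q : ℂ) ^ i ≠ 0 := pow_ne_zero _ hq
  field_simp
  ring

lemma aux_poch_ne (q : ℂ) (h1 : ‖q‖ < 1) (m : ℕ) : qPochC q q m ≠ 0 := by
  rw [qPochC]
  refine Finset.prod_ne_zero_iff.2 fun k _ => ?_
  rw [sub_ne_zero]
  intro h
  have habs : ‖q * q ^ k‖ = ‖q‖ ^ (k + 1) := by
    rw [norm_mul, norm_pow, pow_succ]
    ring
  have hlt : ‖q‖ ^ (k + 1) < 1 :=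
    pow_lt_one₀ (norm_nonneg q) h1 (by omega)
  rw [← h] at habs
  simp only [norm_one] at habs
  rw [← habs] at hlt
  exact lt_irrefl 1 hlt


/-- The `q`-Rice formula: for `0 < |q| < 1` and `f` holomorphic on a closed disc whose
interior contains the points `q^{-1}, …, q^{-n}` but which excludes `1 = q^{0}`
(so the contour encircles exactly the poles `q^{-1}, …, q^{-n}` of `1/(z;q)_{n+1}`
and no singularities of `f`),
`∑_{i=1}^n [n choose i]_q (-1)^{i-1} q^{i(i-1)/2} f(q^{-i})
  = (1/2πi) ∮_C ((q;q)_n/(z;q)_{n+1}) f(z) dz`. -/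
theorem q_rice_formula (q : ℂ) (h0 : 0 < ‖q‖) (h1 : ‖q‖ < 1)
    (n : ℕ) (hn : 1 ≤ n) (f : ℂ → ℂ) (c : ℂ) (R : ℝ) (hR : 0 < R)
    (hf : DifferentiableOn ℂ f (closedBall c R))
    (hin : ∀ i ∈ Icc 1 n, q ^ (-(i : ℤ)) ∈ ball c R)
    (hout : (1 : ℂ) ∉ closedBall c R) :
    ∑ i ∈ Icc 1 n, qBinomC q n i * (-1 : ℂ) ^ (i - 1) * q ^ (i.choose 2) *
        f (q ^ (-(i : ℤ)))
      = (2 * π * Complex.I)⁻¹ *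
          ∮ z in C(c, R), qPochC q q n / qPochC q z (n + 1) * f z := by
  have hq0 : q ≠ 0 := by simpa using h0
  set a : ℕ → ℂ := fun i => q ^ (-(i : ℤ)) with ha
  have h2pi : (2 * (π : ℂ) * Complex.I) ≠ 0 := by
    simp [Real.pi_ne_zero, Complex.I_ne_zero, Complex.ofReal_ne_zero]
  have hainj : ∀ i j : ℕ, a i = a j → i = j := by
    intro i j h
    have h' := congrArg (‖·‖) h
    simp only [ha, norm_zpow] at h'
    have h2 := zpow_right_injective₀ h0 (ne_of_lt h1) h'
    omega
  have hsph : ∀ z ∈ sphere c R, ∀ j ∈ Finset.range (n + 1), z ≠ a j := by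
    intro z hz j hj
    rcases Nat.eq_zero_or_pos j with h | h
    · subst h
      have h00 : a 0 = 1 := by simp [ha]
      rw [h00]
      intro h'
      exact hout (h' ▸ sphere_subset_closedBall hz)
    · intro h'
      have hjn : j ≤ n := by
        have := Finset.mem_range.mp hj
        omega
      have hin' : a j ∈ ball c R :=
        hin j (Finset.mem_Icc.mpr ⟨h, hjn⟩)
      rw [h'] at hz
      have hd1 : dist (a j) c = R := mem_sphere.mp hz
      have hd2 : dist (a j) c < R := mem_ball.mp hin'
      exact absurd hd1 (ne_of_lt hd2)
  set ρ : ℕ → ℂ := fun i => qPochC q q n *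
      ((∏ j ∈ Finset.range (n + 1), ((-1) * q ^ j))
        * ∏ k ∈ (Finset.range (n + 1)).erase i, (a i - a k))⁻¹ with hρ
  have hEqOn : Set.EqOn (fun z => qPochC q q n / qPochC q z (n + 1) * f z)
      (fun z => ∑ i ∈ Finset.range (n + 1), ρ i * ((z - a i)⁻¹ * f z)) (sphere c R) := by
    intro z hz
    have hnon : (Finset.range (n + 1)).Nonempty := ⟨0, by simp⟩
    have hinj : Set.InjOn a (Finset.range (n + 1)) := fun i _ j _ h => hainj i j h
    have hpf := partial_fractions a (Finset.range (n + 1)) hnon hinj z (hsph z hz)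
    simp only
    rw [aux_poch_factor q z hq0 (n + 1), div_eq_mul_inv, mul_inv, hpf, hρ]
    simp only [Finset.mul_sum, Finset.sum_mul]
    refine Finset.sum_congr rfl fun j hj => ?_
    simp only [mul_inv]
    ring
  have hfc : ContinuousOn f (closedBall c R) := hf.continuousOn
  have hInt : ∀ i ∈ Finset.range (n + 1),
      CircleIntegrable (fun z => ρ i * ((z - a i)⁻¹ * f z)) c R := by
    intro i hi
    refine ContinuousOn.circleIntegrable hR.le ?_
    refine continuousOn_const.mul (ContinuousOn.mul ?_ (hfc.mono sphere_subset_closedBall))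
    exact ((continuous_id.sub continuous_const).continuousOn).inv₀
      fun z hz => sub_ne_zero.2 (hsph z hz i hi)
  rw [circleIntegral.integral_congr hR.le hEqOn,
    circleIntegral_finset_sum _ _ c R hInt]
  simp only [circleIntegral.integral_const_mul]
  have hDiff : DiffContOnCl ℂ f (ball c R) :=
    DifferentiableOn.diffContOnCl (by rwa [closure_ball c hR.ne'])
  have hval : ∀ i ∈ Icc 1 n,
      (∮ z in C(c, R), (z - a i)⁻¹ * f z) = (2 * ↑π * Complex.I) * f (a i) := by
    intro i hi
    have h' := hDiff.circleIntegral_sub_inv_smul (hin i hi)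
    simpa only [smul_eq_mul] using h'
  have hzero : (∮ z in C(c, R), (z - a 0)⁻¹ * f z) = 0 := by
    have ha0 : a 0 = 1 := by simp [ha]
    rw [ha0]
    refine Complex.circleIntegral_eq_zero_of_differentiable_on_off_countable hR.le
      Set.countable_empty ?_ ?_
    · exact (((continuous_id.sub continuous_const).continuousOn).inv₀
        fun z hz => sub_ne_zero.2 (ne_of_mem_of_not_mem hz hout)).mul hfc
    · intro z hz
      simp only [Set.diff_empty] at hz
      have hz1 : z ≠ 1 := fun h => hout (h ▸ ball_subset_closedBall hz)
      have hfz : DifferentiableAt ℂ f z := hf.differentiableAt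
        (Filter.mem_of_superset (isOpen_ball.mem_nhds hz) ball_subset_closedBall)
      exact ((differentiableAt_id.sub (differentiableAt_const (1 : ℂ))).inv
        (sub_ne_zero.2 hz1)).mul hfz
  have hsplit : Finset.range (n + 1) = insert 0 (Icc 1 n) := by
    ext x
    simp only [Finset.mem_range, Finset.mem_insert, Finset.mem_Icc]
    omega
  rw [hsplit, Finset.sum_insert (by simp), hzero, mul_zero, zero_add]
  have hvals : (∑ i ∈ Icc 1 n, ρ i * ∮ z in C(c, R), (z - a i)⁻¹ * f z)
      = ∑ i ∈ Icc 1 n, ρ i * ((2 * ↑π * Complex.I) * f (a i)) :=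
    Finset.sum_congr rfl fun i hi => by rw [hval i hi]
  rw [hvals, Finset.mul_sum]
  refine Finset.sum_congr rfl fun i hi => ?_
  obtain ⟨h1i, hin'⟩ := Finset.mem_Icc.mp hi
  have hrho : ρ i = qBinomC q n i * (-1 : ℂ) ^ (i - 1) * q ^ (i.choose 2) := by
    have hD := aux_D q hq0 h1i hin'
    rw [hρ]
    simp only [ha]
    rw [hD, qBinomC]
    have hPi := aux_poch_ne q h1 i
    have hPni := aux_poch_ne q h1 (n - i)
    have hqc : (q : ℂ) ^ i.choose 2 ≠ 0 := pow_ne_zero _ hq0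
    have hsign : (-1 : ℂ) ^ (i + 1) = (-1 : ℂ) ^ (i - 1) := by
      obtain ⟨j, rfl⟩ : ∃ j, i = j + 1 := ⟨i - 1, by omega⟩
      simp [pow_succ, pow_add]
    rw [hsign]
    have hs : ((-1 : ℂ) ^ (i - 1)) ≠ 0 := by
      intro h
      simpa using congrArg (‖·‖) h
    have hss : ((-1 : ℂ) ^ (i - 1)) * (-1) ^ (i - 1) = 1 := by
      rw [← pow_add]
      exact Even.neg_one_pow ⟨i - 1, rfl⟩
    field_simp
    linear_combination
      (-qPochC q q n) * hss
  rw [hrho]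
  simp only [ha]
  field_simp
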